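/- For every even natural number n ≥ 2, there exists a simple graph G on a vertex type of cardinality 2^n such that G is twin-free and the F2-rank of G equals n. -/

import Mathlib

open Matrix

namespace Stmt0Aux

variable {m : ℕ}

/-- index type -/
abbrev I (m : ℕ) := Fin m × Fin 2

/-- vector space -/
abbrev V (m : ℕ) := I m → ZMod 2

def sw (p : I m) : I m := (p.1, p.2 + 1)

lemma sw_sw (p : I m) : sw (sw p) = p := by
  cases p with
  | mk i a =>
    simp only [sw]
    have : a + 1 + 1 = a := by revert a; decide
    rw [this]

lemma sw_inj {p q : I m} (h : sw p = sw q) : p = q := by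
  rw [← sw_sw p, h, sw_sw]

/-- bilinear form -/
def bf (u v : V m) : ZMod 2 := ∑ p, u p * v (sw p)

lemma bf_symm (u v : V m) : bf u v = bf v u := by
  unfold bf
  exact Fintype.sum_equiv (Function.Involutive.toPerm sw sw_sw)
    (fun p => u p * v (sw p)) (fun p => v p * u (sw p))
    (fun p => by simp [Function.Involutive.toPerm, sw_sw, mul_comm])

lemma bf_self (u : V m) : bf u u = 0 := by
  unfold bf
  rw [Fintype.sum_prod_type]
  apply Finset.sum_eq_zero
  intro i _
  rw [Fin.sum_univ_two]
  show u (i,0) * u (sw (i,0)) + u (i,1) * u (sw (i,1)) = 0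
  have h0 : sw (m := m) (i, 0) = (i, 1) := rfl
  have h1 : sw (m := m) (i, 1) = (i, 0) := by
    unfold sw; rw [show (1 : Fin 2) + 1 = 0 by decide]
  rw [h0, h1]
  have : ∀ a b : ZMod 2, a * b + b * a = 0 := by decide
  exact this _ _

lemma bf_single (u : V m) (q : I m) : bf u (Pi.single q 1) = u (sw q) := by
  unfold bf
  have : ∀ p : I m, u p * (Pi.single q 1 : V m) (sw p) = if p = sw q then u p else 0 := by
    intro p
    rw [Pi.single_apply]
    by_cases h : p = sw q
    · subst h; rw [sw_sw]; simp
    · have h2 : sw p ≠ q := fun hc => h (by rw [← hc, sw_sw])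
      simp [h, h2]
  rw [Finset.sum_congr rfl (fun p _ => this p), Finset.sum_ite_eq' Finset.univ (sw q) u]
  simp

end Stmt0Aux

open Stmt0Aux

/-- For every even natural number `n ≥ 2`, there exists a simple graph `G` on a vertex type of
cardinality `2^n` such that `G` is twin-free and the `F2`-rank of `G` equals `n`. -/
theorem stmt_0 (n : ℕ) (hn : Even n) (hn2 : 2 ≤ n) :
    ∃ (G : SimpleGraph (Fin (2 ^ n))) (_ : DecidableRel G.Adj),
      (∀ u v : Fin (2 ^ n), G.neighborSet u = G.neighborSet v → u = v) ∧
      (G.adjMatrix (ZMod 2)).rank = n := by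
  classical
  obtain ⟨m, hm⟩ := hn
  have hcard : Fintype.card (Fin (2 ^ n)) = Fintype.card (V m) := by
    simp only [Fintype.card_fin, Fintype.card_fun, ZMod.card, Fintype.card_prod]
    rw [hm]; congr 1; ring
  let e : Fin (2 ^ n) ≃ V m := Fintype.equivOfCardEq hcard
  let G : SimpleGraph (Fin (2 ^ n)) :=
    { Adj := fun u v => bf (e u) (e v) = 1
      symm := ⟨fun u v h => (bf_symm (e v) (e u)).trans h⟩
      loopless := ⟨fun u h => absurd ((bf_self (e u)).symm.trans h) (by decide)⟩ }
  have hAdj : ∀ u v, G.Adj u v ↔ bf (e u) (e v) = 1 := fun u v => Iff.rfl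
  have hdec : DecidableRel G.Adj := fun u v => decidable_of_iff _ (hAdj u v).symm
  refine ⟨G, hdec, ?_, ?_⟩
  · -- twin-free
    intro u v h
    have h' : ∀ w, bf (e u) (e w) = bf (e v) (e w) := by
      intro w
      have := Set.ext_iff.mp h w
      simp only [SimpleGraph.mem_neighborSet, hAdj] at this
      have key : ∀ a b : ZMod 2, (a = 1 ↔ b = 1) → a = b := by decide
      exact key _ _ this
    have heq : e u = e v := by
      funext p
      have := h' (e.symm (Pi.single (sw p) 1))
      rw [e.apply_symm_apply, bf_single, bf_single, sw_sw] at this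
      exact this
    exact e.injective heq
  · -- rank = n
    have hone : ∀ a : ZMod 2, (if a = 1 then (1 : ZMod 2) else 0) = a := by decide
    set A := G.adjMatrix (ZMod 2) with hAdef
    have hAval : ∀ u v, A u v = bf (e u) (e v) := by
      intro u v
      rw [hAdef, SimpleGraph.adjMatrix_apply]
      by_cases h : G.Adj u v
      · rw [if_pos h]; exact ((hAdj u v).mp h).symm
      · rw [if_neg h]
        have h' : bf (e u) (e v) ≠ 1 := fun hc => h ((hAdj u v).mpr hc)
        have key : ∀ a : ZMod 2, a ≠ 1 → a = 0 := by decide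
        exact (key _ h').symm
    -- upper bound
    let M : Matrix (Fin (2 ^ n)) (I m) (ZMod 2) := fun u p => e u p
    let N : Matrix (I m) (Fin (2 ^ n)) (ZMod 2) := fun p v => e v (sw p)
    have hMN : A = M * N := by
      ext u v
      rw [hAval, Matrix.mul_apply]
      rfl
    have hupper : A.rank ≤ n := by
      calc A.rank ≤ M.rank := by rw [hMN]; exact Matrix.rank_mul_le_left M N
        _ ≤ Fintype.card (I m) := Matrix.rank_le_card_width M
        _ = n := by simp only [Fintype.card_prod, Fintype.card_fin, hm]; ring
    -- lower bound
    let ι : I m → Fin (2 ^ n) := fun p => e.symm (Pi.single p 1)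
    let L : Matrix (I m) (Fin (2 ^ n)) (ZMod 2) := fun p u => if u = ι p then 1 else 0
    let R : Matrix (Fin (2 ^ n)) (I m) (ZMod 2) := fun u q => if u = ι q then 1 else 0
    let C : Matrix (I m) (I m) (ZMod 2) := L * A * R
    have hCval : ∀ p q, C p q = if q = sw p then 1 else 0 := by
      intro p q
      have h1 : (L * A) p = fun v => A (ι p) v := by
        funext v
        rw [Matrix.mul_apply]
        simp [L]
      have h2 : C p q = A (ι p) (ι q) := by
        show (L * A * R) p q = _
        rw [Matrix.mul_apply]
        simp only [h1]
        simp [R]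
      rw [h2, hAval, e.apply_symm_apply, e.apply_symm_apply, bf_single, Pi.single_apply]
      by_cases h : q = sw p
      · subst h
        rw [sw_sw]
        simp
      · have h2 : sw q ≠ p := fun hc => h (by rw [← hc, sw_sw])
        simp [h, h2]
    have hCC : C * C = 1 := by
      ext p r
      rw [Matrix.mul_apply]
      simp only [hCval, Matrix.one_apply]
      have : ∀ q : I m, (if q = sw p then (1:ZMod 2) else 0) * (if r = sw q then 1 else 0)
          = if q = sw p then (if p = r then 1 else 0) else 0 := by
        intro q
        by_cases h : q = sw p
        · subst h
          simp only [if_pos rfl, one_mul]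
          rw [sw_sw]
          congr 1
          simp [eq_comm]
        · simp [h]
      rw [Finset.sum_congr rfl (fun q _ => this q), Finset.sum_ite_eq' Finset.univ (sw p)]
      simp
    have hCrank : C.rank = n := by
      rw [Matrix.rank_of_isUnit C ⟨⟨C, C, hCC, hCC⟩, rfl⟩]
      simp only [Fintype.card_prod, Fintype.card_fin, hm]; ring
    have hlower : n ≤ A.rank := by
      calc n = C.rank := hCrank.symm
        _ = (L * (A * R)).rank := by rw [show C = L * A * R from rfl, Matrix.mul_assoc]
        _ ≤ (A * R).rank := Matrix.rank_mul_le_right L (A * R)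
        _ ≤ A.rank := Matrix.rank_mul_le_left A R
    omega
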